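/- Let P ⊂ ℝ^d be a locally anti-blocking lattice polytope of dimension d, and for each ε ∈ {−1,1}^d let P_ε ⊆ ℝ^d_{≥0} be a d-dimensional anti-blocking lattice polytope with P ∩ ℝ^d_ε = P_ε^± ∩ ℝ^d_ε. Then h*(P, x) = (1/2^d) · ∑_{ε ∈ {−1,1}^d} h*(P_ε^±, x). In particular, h*(P, x) is γ-positive whenever h*(P_ε^±, x) is γ-positive for every ε ∈ {−1,1}^d. -/

import Mathlib

open scoped Pointwise
open Polynomial

namespace ABP

variable {V : Type*}

/-- A point of `ℝ^V` all of whose coordinates are integers. -/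
def IsLatticePoint (x : V → ℝ) : Prop := ∀ i, ∃ z : ℤ, x i = (z : ℝ)

/-- A lattice polytope: the convex hull of finitely many lattice points. -/
def IsLatticePolytope [Fintype V] (P : Set (V → ℝ)) : Prop :=
  ∃ S : Finset (V → ℝ), (∀ v ∈ S, IsLatticePoint v) ∧ P = convexHull ℝ (S : Set (V → ℝ))

/-- The dimension of a polytope, as the rank of its vector span. -/
noncomputable def polyDim [Fintype V] (P : Set (V → ℝ)) : ℕ :=
  Module.finrank ℝ (vectorSpan ℝ P)

/-- The number of lattice points of the `m`-th dilate of `P`. -/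
noncomputable def latticeCount [Fintype V] (P : Set (V → ℝ)) (m : ℕ) : ℕ :=
  Set.ncard {x : V → ℤ | (fun i => (x i : ℝ)) ∈ (m : ℝ) • P}

/-- `h` is the `h^*`-polynomial of the lattice polytope `P`:
`(1 + ∑_{m≥1} L_P(m) x^m) · (1-x)^{dim P + 1} = h` as formal power series. -/
def IsHStar [Fintype V] (P : Set (V → ℝ)) (h : Polynomial ℝ) : Prop :=
  (PowerSeries.mk fun m => if m = 0 then (1 : ℝ) else (latticeCount P m : ℝ)) *
      (1 - PowerSeries.X) ^ (polyDim P + 1) = (h : PowerSeries ℝ)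

/-- `f` is γ-positive: `f = ∑ γ_i x^i (1+x)^{deg f - 2i}` with all `γ_i ≥ 0`. -/
def GammaPositive (f : Polynomial ℝ) : Prop :=
  ∃ γ : ℕ → ℝ, (∀ i, 0 ≤ γ i) ∧
    f = ∑ i ∈ Finset.range (f.natDegree / 2 + 1),
      Polynomial.C (γ i) * Polynomial.X ^ i * (1 + Polynomial.X) ^ (f.natDegree - 2 * i)

/-- A real polynomial is real-rooted if all of its complex roots are real. -/
def RealRooted (f : Polynomial ℝ) : Prop :=
  ∀ z : ℂ, (f.map (algebraMap ℝ ℂ)).IsRoot z → z.im = 0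

/-- The `±1`-vector associated to `ε : V → Bool`. -/
def signVec (ε : V → Bool) : V → ℝ := fun i => if ε i then 1 else -1

/-- The unconditional set `P^± = {εx : ε ∈ {-1,1}^V, x ∈ P}`. -/
def uncond (P : Set (V → ℝ)) : Set (V → ℝ) :=
  {y | ∃ (ε : V → Bool) (x : V → ℝ), x ∈ P ∧ y = signVec ε * x}

/-- The closed orthant `ℝ^V_ε`. -/
def orthant (ε : V → Bool) : Set (V → ℝ) := {x | ∀ i, 0 ≤ signVec ε i * x i}

/-- Anti-blocking set: contained in the nonnegative orthant and downward closed there. -/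
def IsAntiBlocking (P : Set (V → ℝ)) : Prop :=
  (∀ x ∈ P, ∀ i, 0 ≤ x i) ∧
    ∀ y ∈ P, ∀ x : V → ℝ, (∀ i, 0 ≤ x i ∧ x i ≤ y i) → x ∈ P

/-- Locally anti-blocking (full-dimensional) lattice polytope. -/
def LocallyAntiBlocking [Fintype V] (P : Set (V → ℝ)) : Prop :=
  ∀ ε : V → Bool, ∃ Q : Set (V → ℝ), IsLatticePolytope Q ∧ IsAntiBlocking Q ∧
    polyDim Q = Fintype.card V ∧ P ∩ orthant ε = uncond Q ∩ orthant ε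

/-- The dual (polar) body of `P`. -/
def dualPoly [Fintype V] (P : Set (V → ℝ)) : Set (V → ℝ) :=
  {y | ∀ x ∈ P, ∑ i, x i * y i ≤ 1}

/-- `P` is a reflexive polytope. -/
def IsReflexive [Fintype V] (P : Set (V → ℝ)) : Prop :=
  IsLatticePolytope P ∧ (0 : V → ℝ) ∈ interior P ∧ IsLatticePolytope (dualPoly P)

/-- The `i`-th unit coordinate vector. -/
def unitVec [DecidableEq V] (i : V) : V → ℝ := fun j => if j = i then 1 else 0

/-- Symmetric edge polytope of type A: `conv{±(e_i - e_j) : {i,j} ∈ E(G)}`. -/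
def symEdgeA [DecidableEq V] (G : SimpleGraph V) : Set (V → ℝ) :=
  convexHull ℝ {v | ∃ i j, G.Adj i j ∧ v = unitVec i - unitVec j}

/-- The polytope `B_G = conv({0, e_1, …, e_d} ∪ {e_i + e_j : {i,j} ∈ E(G)})`. -/
def typeBBase [DecidableEq V] (G : SimpleGraph V) : Set (V → ℝ) :=
  convexHull ℝ ({0} ∪ {v | ∃ i, v = unitVec i} ∪
    {v | ∃ i j, G.Adj i j ∧ v = unitVec i + unitVec j})

/-- Symmetric edge polytope of type B: `𝓑_G = (B_G)^±`. -/
def symEdgeB [DecidableEq V] (G : SimpleGraph V) : Set (V → ℝ) := uncond (typeBBase G)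

/-- The suspension of a graph on `Fin d`: a new vertex joined to all old vertices. -/
def suspension {d : ℕ} (G : SimpleGraph (Fin d)) : SimpleGraph (Fin (d + 1)) :=
  SimpleGraph.fromRel (fun a b =>
    (∃ p q : Fin d, G.Adj p q ∧ a = p.castSucc ∧ b = q.castSucc) ∨
      (a ≠ Fin.last d ∧ b = Fin.last d))

/-- The cut `E_S` of `G`, as a spanning subgraph of `G`. -/
def cutGraph [DecidableEq V] (G : SimpleGraph V) (S : Finset V) : SimpleGraph V :=
  SimpleGraph.fromRel (fun a b => G.Adj a b ∧ ((a ∈ S) ↔ (b ∉ S)))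

/-- Contraction of the edge `{i,j}`: merge `j` into `i` (the vertex `j` becomes isolated,
so that the resulting polytopes are the same as for the contracted graph on `d-1` vertices). -/
def contractEdge {d : ℕ} (G : SimpleGraph (Fin d)) (i j : Fin d) : SimpleGraph (Fin d) :=
  SimpleGraph.fromRel (fun a b => a ≠ j ∧ b ≠ j ∧
    (G.Adj a b ∨ (a = i ∧ G.Adj j b) ∨ (b = i ∧ G.Adj a j)))

/-- The graph `G̃` attached to a bipartite graph `G` with bipartition `V₁ ∪ V₁ᶜ`. -/
def tildeGraph {d : ℕ} (G : SimpleGraph (Fin d)) (V1 : Finset (Fin d)) :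
    SimpleGraph (Fin (d + 2)) :=
  SimpleGraph.fromRel (fun a b =>
    (∃ p q : Fin d, G.Adj p q ∧ a = p.castSucc.castSucc ∧ b = q.castSucc.castSucc) ∨
    (∃ p ∈ V1, a = (p.castSucc.castSucc : Fin (d + 2)) ∧ b = (⟨d, by omega⟩ : Fin (d + 2))) ∨
    (∃ p : Fin d, p ∉ V1 ∧ a = p.castSucc.castSucc ∧ b = (⟨d + 1, by omega⟩ : Fin (d + 2))) ∨
    (a = (⟨d, by omega⟩ : Fin (d + 2)) ∧ b = (⟨d + 1, by omega⟩ : Fin (d + 2))))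

/-- Unimodular (lattice) equivalence of polytopes. -/
def UnimodEquiv {n m : ℕ} (P : Set (Fin n → ℝ)) (Q : Set (Fin m → ℝ)) : Prop :=
  ∃ (f : (Fin n → ℝ) →ᵃ[ℝ] (Fin m → ℝ)) (g : (Fin m → ℝ) →ᵃ[ℝ] (Fin n → ℝ)),
    f '' P = Q ∧ g '' Q = P ∧ (∀ x ∈ P, g (f x) = x) ∧ (∀ y ∈ Q, f (g y) = y) ∧
    (∀ x, IsLatticePoint x → IsLatticePoint (f x)) ∧
    (∀ y, IsLatticePoint y → IsLatticePoint (g y))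

/-- A subgraph is 2-connected: connected, and still connected after deleting any vertex. -/
def TwoConnSub {G : SimpleGraph V} (B : G.Subgraph) : Prop :=
  B.Connected ∧ ∀ v ∈ B.verts, (B.deleteVerts {v}).Connected

/-- A block (2-connected component) of `G`: a maximal 2-connected subgraph. -/
def IsBlock (G : SimpleGraph V) (B : G.Subgraph) : Prop :=
  TwoConnSub B ∧ ∀ B' : G.Subgraph, B ≤ B' → TwoConnSub B' → B' = B

/-- The coordinate projection `π_J` of a subset of `ℝ^d` onto `ℝ^{|J|}`. -/
def projSet {d : ℕ} (J : Finset (Fin d)) (P : Set (Fin d → ℝ)) : Set (Fin J.card → ℝ) :=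
  (fun (x : Fin d → ℝ) (k : Fin J.card) => x (J.orderEmbOfFin rfl k)) '' P

section Posets

variable {d : ℕ}

/-- `A` is an antichain of the poset `P` on `Fin d`. -/
def IsPosetAntichain (P : PartialOrder (Fin d)) (A : Finset (Fin d)) : Prop :=
  ∀ i ∈ A, ∀ j ∈ A, i ≠ j → ¬ P.lt i j ∧ ¬ P.lt j i

/-- The chain polytope of a poset on `Fin d`. -/
def chainPoly (P : PartialOrder (Fin d)) : Set (Fin d → ℝ) :=
  convexHull ℝ {x | ∃ A : Finset (Fin d), IsPosetAntichain P A ∧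
    x = fun i => if i ∈ A then (1 : ℝ) else 0}

/-- The enriched chain polytope `C_P^(e) = (C_P)^±`. -/
def enrichedChainPoly (P : PartialOrder (Fin d)) : Set (Fin d → ℝ) := uncond (chainPoly P)

/-- The twinned chain polytope `C_{P,Q} = conv(C_P ∪ -C_Q)`. -/
def twinnedChainPoly (P Q : PartialOrder (Fin d)) : Set (Fin d → ℝ) :=
  convexHull ℝ (chainPoly P ∪ -(chainPoly Q))

/-- The order polytope of a poset on `Fin d`. -/
def orderPoly (P : PartialOrder (Fin d)) : Set (Fin d → ℝ) :=
  {x | (∀ i, 0 ≤ x i ∧ x i ≤ 1) ∧ ∀ i j, P.lt i j → x i ≤ x j}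

/-- A poset on `Fin d` is naturally labeled. -/
def NaturallyLabeled (P : PartialOrder (Fin d)) : Prop := ∀ i j, P.lt i j → i < j

/-- `π` (as a listing `π 0, π 1, …`) is a linear extension of `P`. -/
def IsLinearExtension (P : PartialOrder (Fin d)) (π : Fin d → Fin d) : Prop :=
  Function.Bijective π ∧ ∀ a b, P.lt (π a) (π b) → a < b

/-- The sequence of (1-based) labels of the listing `π`, with sentinel `π_0 = 0`. -/
def seqOf (π : Fin d → Fin d) (k : ℕ) : ℕ :=
  if h : 1 ≤ k ∧ k ≤ d then (π ⟨k - 1, by omega⟩).val + 1 else 0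

/-- The number of left peaks of the listing `π`. -/
def leftPeakCount (π : Fin d → Fin d) : ℕ :=
  ((Finset.Icc 1 (d - 1)).filter
    (fun i => seqOf π (i - 1) < seqOf π i ∧ seqOf π (i + 1) < seqOf π i)).card

open scoped Classical in
/-- The left peak polynomial `W_P^(ℓ)(x) = ∑_{π ∈ L(P)} x^{pk^(ℓ)(π)}`. -/
noncomputable def leftPeakPoly (P : PartialOrder (Fin d)) : Polynomial ℝ :=
  ∑ π : Equiv.Perm (Fin d),
    if IsLinearExtension P (π : Fin d → Fin d) then
      Polynomial.X ^ leftPeakCount (π : Fin d → Fin d) else 0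

/-- The strict order of the ordinal sum `P_I ⊕ Q_{Iᶜ}` of induced subposets. -/
def ordinalSumLt (P Q : PartialOrder (Fin d)) (I : Set (Fin d)) (i j : Fin d) : Prop :=
  (i ∈ I ∧ j ∈ I ∧ P.lt i j) ∨ (i ∉ I ∧ j ∉ I ∧ Q.lt i j) ∨ (i ∈ I ∧ j ∉ I)

/-- The polynomial `(x+1)^d f(4x/(x+1)^2)` (for `deg f ≤ d/2`). -/
noncomputable def gammaSub (d : ℕ) (f : Polynomial ℝ) : Polynomial ℝ :=
  ∑ k ∈ Finset.range (d + 1),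
    Polynomial.C (f.coeff k * 4 ^ k) * Polynomial.X ^ k * (1 + Polynomial.X) ^ (d - 2 * k)

/-- The Cayley sum `X * Y ⊂ ℝ^{d+1}`. -/
def cayleySum (X Y : Set (Fin d → ℝ)) : Set (Fin (d + 1) → ℝ) :=
  convexHull ℝ ({z | ∃ x ∈ X, z = Fin.snoc x 0} ∪ {z | ∃ y ∈ Y, z = Fin.snoc y 1})

/-- `Ω(X, Y) = conv((X × {1}) ∪ (−Y × {−1})) ⊂ ℝ^{d+1}`. -/
def omegaSum (X Y : Set (Fin d → ℝ)) : Set (Fin (d + 1) → ℝ) :=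
  convexHull ℝ ({z | ∃ x ∈ X, z = Fin.snoc x 1} ∪ {z | ∃ y ∈ Y, z = -(Fin.snoc y 1)})

/-- `Γ(X, Y) = conv(X ∪ (−Y))`. -/
def gammaSum (X Y : Set (Fin d → ℝ)) : Set (Fin d → ℝ) :=
  convexHull ℝ (X ∪ -Y)

/-- Enriched `(P,Q)`-partition. -/
def IsEnrichedPQPartition (P Q : PartialOrder (Fin d)) (f : Fin d → ℤ) : Prop :=
  (∀ x y, P.lt x y → 0 ≤ f x → 0 ≤ f y → f x ≤ f y) ∧
  (∀ x y, Q.lt x y → f x ≤ 0 → f y ≤ 0 → f y ≤ f x)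

/-- `M(f) = max({0} ∪ f([d]))`. -/
def maxVal (f : Fin d → ℤ) : ℤ :=
  (insert 0 (Finset.image f Finset.univ)).max' (Finset.insert_nonempty _ _)

/-- `m(f) = min({0} ∪ f([d]))`. -/
def minVal (f : Fin d → ℤ) : ℤ :=
  (insert 0 (Finset.image f Finset.univ)).min' (Finset.insert_nonempty _ _)

/-- The number of enriched `(P,Q)`-partitions `f` with `M(f) - m(f) ≤ m`. -/
noncomputable def OmegaPQ (P Q : PartialOrder (Fin d)) (m : ℕ) : ℕ :=
  Set.ncard {f : Fin d → ℤ | IsEnrichedPQPartition P Q f ∧ maxVal f - minVal f ≤ (m : ℤ)}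

end Posets

section Faces

variable [Fintype V]

/-- `F` is a face of `P` (cut out by a supporting linear functional). -/
def IsFace (P F : Set (V → ℝ)) : Prop :=
  ∃ (c : V → ℝ) (b : ℝ), (∀ x ∈ P, ∑ i, c i * x i ≤ b) ∧ F = {x ∈ P | ∑ i, c i * x i = b}

/-- `F` is a facet of `P`: a face of dimension `dim P - 1`. -/
def IsFacet (P F : Set (V → ℝ)) : Prop :=
  IsFace P F ∧ polyDim F + 1 = polyDim P

/-- `F` is a simplex: the convex hull of affinely independent points. -/
def IsSimplexSet (F : Set (V → ℝ)) : Prop :=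
  ∃ S : Finset (V → ℝ), AffineIndependent ℝ (fun v : S => (v : V → ℝ)) ∧
    F = convexHull ℝ (S : Set (V → ℝ))

end Faces

end ABP


namespace ABP

section Aux

variable {d : ℕ}

lemma signVec_sq (ε : Fin d → Bool) (i : Fin d) (t : ℝ) :
    signVec ε i * (signVec ε i * t) = t := by
  unfold signVec; rcases ε i <;> simp

lemma abs_signVec_mul (ε : Fin d → Bool) (i : Fin d) (t : ℝ) :
    |signVec ε i * t| = |t| := by
  unfold signVec; rcases ε i <;> simp

lemma mem_uncond_self {Q : Set (Fin d → ℝ)} {x : Fin d → ℝ} (hx : x ∈ Q) :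
    x ∈ uncond Q := by
  refine ⟨fun _ => true, x, hx, ?_⟩
  funext i; simp [signVec]

lemma mem_uncond_iff_abs {Q : Set (Fin d → ℝ)} (hQ : ∀ x ∈ Q, ∀ i, 0 ≤ x i)
    {y : Fin d → ℝ} : y ∈ uncond Q ↔ (fun i => |y i|) ∈ Q := by
  constructor
  · rintro ⟨ε, x, hx, rfl⟩
    have : (fun i => |(signVec ε * x) i|) = x := by
      funext i
      rw [Pi.mul_apply, abs_signVec_mul, abs_of_nonneg (hQ x hx i)]
    rwa [this]
  · intro hy
    refine ⟨fun i => decide (0 ≤ y i), fun i => |y i|, hy, ?_⟩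
    funext i
    rw [Pi.mul_apply]
    by_cases h : 0 ≤ y i
    · simp [signVec, h, abs_of_nonneg h]
    · have hd : decide (0 ≤ y i) = false := by simp [h]
      simp only [signVec, hd, Bool.false_eq_true, if_false]
      rw [abs_of_neg (not_le.mp h)]; ring

lemma smul_uncond (c : ℝ) (Q : Set (Fin d → ℝ)) :
    c • uncond Q = uncond (c • Q) := by
  ext y
  constructor
  · rintro ⟨z, ⟨ε, x, hx, rfl⟩, rfl⟩
    refine ⟨ε, c • x, ⟨x, hx, rfl⟩, ?_⟩
    funext i
    simp only [Pi.smul_apply, Pi.mul_apply, smul_eq_mul]; ring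
  · rintro ⟨ε, z, ⟨x, hx, rfl⟩, rfl⟩
    refine ⟨signVec ε * x, ⟨ε, x, hx, rfl⟩, ?_⟩
    funext i
    simp only [Pi.smul_apply, Pi.mul_apply, smul_eq_mul]; ring

lemma neg_mem_uncond {Q : Set (Fin d → ℝ)} {y : Fin d → ℝ} (hy : y ∈ uncond Q) :
    -y ∈ uncond Q := by
  obtain ⟨ε, x, hx, rfl⟩ := hy
  refine ⟨fun i => !(ε i), x, hx, ?_⟩
  funext i
  simp only [Pi.neg_apply, Pi.mul_apply, signVec]
  by_cases hb : ε i = true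
  · simp [hb]
  · rw [Bool.not_eq_true] at hb; simp [hb]

lemma smul_set_nonneg {Q : Set (Fin d → ℝ)} (hQ : ∀ x ∈ Q, ∀ i, 0 ≤ x i)
    {c : ℝ} (hc : 0 ≤ c) : ∀ x ∈ c • Q, ∀ i, 0 ≤ x i := by
  rintro x ⟨z, hz, rfl⟩ i
  exact mul_nonneg hc (hQ z hz i)

lemma smul_orthant {c : ℝ} (hc : 0 < c) (ε : Fin d → Bool) :
    c • orthant ε = orthant ε := by
  ext x
  rw [Set.mem_smul_set_iff_inv_smul_mem₀ (ne_of_gt hc)]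
  unfold orthant
  constructor
  · intro hx i
    have h1 : 0 ≤ signVec ε i * (c⁻¹ * x i) := by simpa using hx i
    have h2 : 0 ≤ c * (signVec ε i * (c⁻¹ * x i)) := mul_nonneg hc.le h1
    calc (0:ℝ) ≤ c * (signVec ε i * (c⁻¹ * x i)) := h2
      _ = signVec ε i * x i := by field_simp
  · intro hx i
    simp only [Pi.smul_apply, smul_eq_mul]
    rw [show signVec ε i * (c⁻¹ * x i) = c⁻¹ * (signVec ε i * x i) by ring]
    exact mul_nonneg (inv_nonneg.mpr hc.le) (hx i)

lemma smul_inter_orthant {c : ℝ} (hc : 0 < c) (A : Set (Fin d → ℝ)) (ε : Fin d → Bool) :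
    c • (A ∩ orthant ε) = (c • A) ∩ orthant ε := by
  rw [Set.smul_set_inter₀ (ne_of_gt hc), smul_orthant hc]

end Aux

end ABP


namespace ABP

section Aux2

variable {d : ℕ}

lemma finite_lattice_of_bound (B : Set (Fin d → ℝ)) (R : ℝ)
    (hB : ∀ x ∈ B, ∀ i, |x i| ≤ R) :
    {x : Fin d → ℤ | (fun i => (x i : ℝ)) ∈ B}.Finite := by
  have hsub : {x : Fin d → ℤ | (fun i => (x i : ℝ)) ∈ B} ⊆
      Set.pi Set.univ (fun _ : Fin d => Set.Icc (-⌈R⌉) ⌈R⌉) := by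
    intro x hx i _
    have h1 : |(x i : ℝ)| ≤ R := hB _ hx i
    have h2 : ((|x i| : ℤ) : ℝ) ≤ (⌈R⌉ : ℝ) := by
      push_cast
      exact h1.trans (Int.le_ceil R)
    have h3 : |x i| ≤ ⌈R⌉ := by exact_mod_cast h2
    exact Set.mem_Icc.mpr (abs_le.mp h3)
  exact Set.Finite.subset (Set.Finite.pi fun _ => Set.finite_Icc _ _) hsub

lemma hull_bound (S : Finset (Fin d → ℝ)) :
    ∀ x ∈ convexHull ℝ (S : Set (Fin d → ℝ)), ∀ i,
      |x i| ≤ ∑ v ∈ S, ∑ j, |v j| := by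
  set R : ℝ := ∑ v ∈ S, ∑ j, |v j| with hR
  have hconv : Convex ℝ {x : Fin d → ℝ | ∀ i, |x i| ≤ R} := by
    have : {x : Fin d → ℝ | ∀ i, |x i| ≤ R} =
        Set.pi Set.univ (fun _ : Fin d => Set.Icc (-R) R) := by
      ext x
      simp only [Set.mem_setOf_eq, Set.mem_pi, Set.mem_univ, forall_true_left,
        Set.mem_Icc, abs_le]
    rw [this]
    exact convex_pi fun _ _ => convex_Icc _ _
  have hsub : (S : Set (Fin d → ℝ)) ⊆ {x : Fin d → ℝ | ∀ i, |x i| ≤ R} := by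
    intro v hv i
    have h1 : |v i| ≤ ∑ j, |v j| :=
      Finset.single_le_sum (fun j _ => abs_nonneg (v j)) (Finset.mem_univ i)
    refine h1.trans ?_
    exact Finset.single_le_sum (f := fun v => ∑ j, |v j|)
      (fun w _ => Finset.sum_nonneg fun j _ => abs_nonneg (w j)) hv
  intro x hx
  exact convexHull_min hsub hconv hx

lemma uncond_bound {Q : Set (Fin d → ℝ)} {R : ℝ}
    (hQ : ∀ x ∈ Q, ∀ i, |x i| ≤ R) :
    ∀ x ∈ uncond Q, ∀ i, |x i| ≤ R := by
  rintro x ⟨ε, z, hz, rfl⟩ i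
  rw [Pi.mul_apply, abs_signVec_mul]
  exact hQ z hz i

lemma smul_bound {B : Set (Fin d → ℝ)} {R c : ℝ}
    (hB : ∀ x ∈ B, ∀ i, |x i| ≤ R) :
    ∀ x ∈ c • B, ∀ i, |x i| ≤ |c| * R := by
  rintro x ⟨z, hz, rfl⟩ i
  show |c • z i| ≤ |c| * R
  rw [smul_eq_mul, abs_mul]
  exact mul_le_mul_of_nonneg_left (hB z hz i) (abs_nonneg c)

/-- the set of lattice points of a dilate of `uncond` of a lattice polytope is finite -/
lemma finite_dilate_uncond (S : Finset (Fin d → ℝ)) (c : ℝ) :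
    {x : Fin d → ℤ | (fun i => (x i : ℝ)) ∈ c • uncond (convexHull ℝ (S : Set (Fin d → ℝ)))}.Finite :=
  finite_lattice_of_bound _ _ (smul_bound (uncond_bound (hull_bound S)))

lemma finite_dilate_hull (S : Finset (Fin d → ℝ)) (c : ℝ) :
    {x : Fin d → ℤ | (fun i => (x i : ℝ)) ∈ c • convexHull ℝ (S : Set (Fin d → ℝ))}.Finite := by
  refine Set.Finite.subset (finite_dilate_uncond S c) ?_
  intro x hx
  exact Set.smul_set_mono (fun y hy => mem_uncond_self hy) hx

lemma polyDim_uncond_eq {Q : Set (Fin d → ℝ)} (hQ : polyDim Q = d) :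
    polyDim (uncond Q) = d := by
  refine le_antisymm ?_ ?_
  · calc polyDim (uncond Q) ≤ Module.finrank ℝ (Fin d → ℝ) := Submodule.finrank_le _
      _ = d := Module.finrank_fin_fun ℝ
  · calc d = polyDim Q := hQ.symm
      _ ≤ polyDim (uncond Q) :=
        Submodule.finrank_mono (vectorSpan_mono ℝ (fun x hx => mem_uncond_self hx))

end Aux2

end ABP


namespace ABP

section Count

variable {d : ℕ}

/-- sign-flip of an integer vector by `ε`, composed with coordinatewise absolute value -/
def zmap (ε : Fin d → Bool) (y : Fin d → ℤ) : Fin d → ℤ :=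
  fun i => (if ε i then 1 else -1) * |y i|

/-- record of sign data -/
def bmap (ε : Fin d → Bool) (y : Fin d → ℤ) : Fin d → Bool :=
  fun i => if y i = 0 then ε i else decide (0 ≤ y i)

lemma zsign_decide (t : ℤ) : (if decide (0 ≤ t) then (1:ℤ) else -1) * |t| = t := by
  by_cases h : 0 ≤ t
  · simp [h, abs_of_nonneg h]
  · have hd : decide (0 ≤ t) = false := by simp [h]
    rw [hd]
    simp only [Bool.false_eq_true, if_false]
    rw [abs_of_neg (not_le.mp h)]; ring

lemma zsign_abs (b : Bool) (t : ℤ) : abs ((if b then (1:ℤ) else -1) * |t|) = |t| := by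
  cases b <;> simp

lemma zsign_eq_zero_iff (b : Bool) (t : ℤ) :
    (if b then (1:ℤ) else -1) * |t| = 0 ↔ t = 0 := by
  cases b <;> simp

lemma decide_zsign (b : Bool) (t : ℤ) (ht : t ≠ 0) :
    decide (0 ≤ (if b then (1:ℤ) else -1) * |t|) = b := by
  have habs : (0:ℤ) < |t| := abs_pos.mpr ht
  cases b
  · have h1 : (if (false : Bool) then (1:ℤ) else -1) * |t| = -|t| := by simp
    rw [h1]
    simp only [decide_eq_false_iff_not, not_le]
    omega
  · have h1 : (if (true : Bool) then (1:ℤ) else -1) * |t| = |t| := by simp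
    rw [h1]
    simp [le_of_lt habs]

lemma bz_involutive (ε : Fin d → Bool) (y : Fin d → ℤ) :
    bmap (bmap ε y) (zmap ε y) = ε ∧ zmap (bmap ε y) (zmap ε y) = y := by
  constructor
  · funext i
    show (if zmap ε y i = 0 then bmap ε y i else decide (0 ≤ zmap ε y i)) = ε i
    by_cases h0 : y i = 0
    · have hz : zmap ε y i = 0 := by unfold zmap; rw [h0]; simp
      rw [if_pos hz]
      unfold bmap
      rw [if_pos h0]
    · have hz : zmap ε y i ≠ 0 := fun hc => h0 ((zsign_eq_zero_iff _ _).mp hc)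
      rw [if_neg hz]
      exact decide_zsign (ε i) (y i) h0
  · funext i
    show (if bmap ε y i then (1:ℤ) else -1) * |zmap ε y i| = y i
    have habs : |zmap ε y i| = |y i| := zsign_abs _ _
    rw [habs]
    by_cases h0 : y i = 0
    · rw [h0]; simp
    · have hb : bmap ε y i = decide (0 ≤ y i) := by unfold bmap; rw [if_neg h0]
      rw [hb]
      exact zsign_decide (y i)

lemma cast_zmap (ε : Fin d → Bool) (y : Fin d → ℤ) :
    (fun i => ((zmap ε y) i : ℝ)) = signVec ε * (fun i => |(y i : ℝ)|) := by
  funext i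
  show ((zmap ε y i : ℤ) : ℝ) = signVec ε i * |(y i : ℝ)|
  unfold zmap signVec
  by_cases hb : ε i = true
  · rw [hb]; simp [Int.cast_abs]
  · rw [Bool.not_eq_true] at hb; rw [hb]; simp [Int.cast_abs]

section Geo

variable (P : Set (Fin d → ℝ)) (Pε : (Fin d → Bool) → Set (Fin d → ℝ))
  (hεpos : ∀ ε, (Pε ε) ⊆ {x | ∀ i, 0 ≤ x i})
  (hεint : ∀ ε, P ∩ orthant ε = uncond (Pε ε) ∩ orthant ε)
  {c : ℝ} (hc : 0 < c)

include hεpos hεint hc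

lemma fwd_mem (ε : Fin d → Bool) (y : Fin d → ℤ)
    (hy : (fun i => (y i : ℝ)) ∈ c • uncond (Pε ε)) :
    (fun i => ((zmap ε y) i : ℝ)) ∈ c • P := by
  have hpos : ∀ x ∈ c • Pε ε, ∀ i, 0 ≤ x i :=
    smul_set_nonneg (fun x hx i => hεpos ε hx i) hc.le
  rw [smul_uncond] at hy
  have habs : (fun i => |(y i : ℝ)|) ∈ c • (Pε ε) := (mem_uncond_iff_abs hpos).mp hy
  have hmem : signVec ε * (fun i => |(y i : ℝ)|) ∈ uncond (c • Pε ε) :=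
    ⟨ε, _, habs, rfl⟩
  rw [← smul_uncond] at hmem
  have horth : signVec ε * (fun i => |(y i : ℝ)|) ∈ orthant ε := by
    intro i
    rw [Pi.mul_apply, signVec_sq]
    exact abs_nonneg _
  have hint : signVec ε * (fun i => |(y i : ℝ)|) ∈ (c • uncond (Pε ε)) ∩ orthant ε :=
    ⟨hmem, horth⟩
  rw [← smul_inter_orthant hc, ← hεint ε, smul_inter_orthant hc] at hint
  rw [cast_zmap]
  exact hint.1

lemma bwd_mem (δ : Fin d → Bool) (z : Fin d → ℤ)
    (hz : (fun i => (z i : ℝ)) ∈ c • P) :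
    (fun i => ((zmap δ z) i : ℝ)) ∈ c • uncond (Pε (bmap δ z)) := by
  set ε := bmap δ z with hε
  have horth : (fun i => (z i : ℝ)) ∈ orthant ε := by
    intro i
    show 0 ≤ signVec ε i * (z i : ℝ)
    by_cases h0 : z i = 0
    · simp [h0]
    · have hεi : ε i = decide (0 ≤ z i) := by
        rw [hε]; unfold bmap; simp [h0]
      by_cases h : 0 ≤ z i
      · have : signVec ε i = 1 := by
          unfold signVec; rw [hεi]; simp [h]
        rw [this, one_mul]
        exact_mod_cast h
      · have : signVec ε i = -1 := by
          unfold signVec; rw [hεi]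
          have hd : decide (0 ≤ z i) = false := by simp [h]
          rw [hd]; simp
        rw [this]
        have : (z i : ℝ) < 0 := by exact_mod_cast not_le.mp h
        nlinarith
  have hz2 : (fun i => (z i : ℝ)) ∈ c • uncond (Pε ε) := by
    have hint : (fun i => (z i : ℝ)) ∈ (c • P) ∩ orthant ε := ⟨hz, horth⟩
    rw [← smul_inter_orthant hc, hεint ε, smul_inter_orthant hc] at hint
    exact hint.1
  have hpos : ∀ x ∈ c • Pε ε, ∀ i, 0 ≤ x i :=
    smul_set_nonneg (fun x hx i => hεpos ε hx i) hc.le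
  rw [smul_uncond] at hz2 ⊢
  have habs : (fun i => |(z i : ℝ)|) ∈ c • (Pε ε) := (mem_uncond_iff_abs hpos).mp hz2
  rw [cast_zmap]
  exact ⟨δ, _, habs, rfl⟩

end Geo

end Count

end ABP


namespace ABP

section CountMain

variable {d : ℕ}

private lemma ncard_sigma_sum {ι : Type*} [Fintype ι] {α : Type*} (S : ι → Set α)
    (hS : ∀ i, (S i).Finite) : Nat.card (Σ i, ↥(S i)) = ∑ i, (S i).ncard := by
  letI : ∀ i, Fintype ↥(S i) := fun i => (hS i).fintype
  rw [Nat.card_eq_fintype_card, Fintype.card_sigma]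
  exact Finset.sum_congr rfl fun i _ => by
    rw [← Nat.card_coe_set_eq, Nat.card_eq_fintype_card]

private lemma sigsub_ext {ι : Type*} {p : ι → (Fin d → ℤ) → Prop}
    {a b : Σ i : ι, {y : Fin d → ℤ // p i y}} (h1 : a.1 = b.1) (h2 : a.2.1 = b.2.1) :
    a = b := by
  rcases a with ⟨i, y, hy⟩
  rcases b with ⟨j, z, hz⟩
  dsimp at h1 h2
  subst h1
  subst h2
  rfl

lemma counting_identity (P : Set (Fin d → ℝ)) (hlat : IsLatticePolytope P)
    (Pε : (Fin d → Bool) → Set (Fin d → ℝ))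
    (hεlat : ∀ ε, IsLatticePolytope (Pε ε))
    (hεpos : ∀ ε, (Pε ε) ⊆ {x | ∀ i, 0 ≤ x i})
    (hεint : ∀ ε, P ∩ orthant ε = uncond (Pε ε) ∩ orthant ε)
    (m : ℕ) (hm : 1 ≤ m) :
    ∑ ε : Fin d → Bool, latticeCount (uncond (Pε ε)) m = 2 ^ d * latticeCount P m := by
  classical
  have hc : (0:ℝ) < (m:ℝ) := by
    have : 0 < m := hm
    exact_mod_cast this
  let Tsub := {z : Fin d → ℤ // (fun i => (z i : ℝ)) ∈ (m:ℝ) • P}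
  let Ssub := fun ε : Fin d → Bool =>
    {y : Fin d → ℤ // (fun i => (y i : ℝ)) ∈ (m:ℝ) • uncond (Pε ε)}
  let e : (Σ ε : Fin d → Bool, Ssub ε) ≃ ((Fin d → Bool) × Tsub) :=
    { toFun := fun p => (bmap p.1 p.2.1,
        ⟨zmap p.1 p.2.1, fwd_mem P Pε hεpos hεint hc p.1 p.2.1 p.2.2⟩)
      invFun := fun q => ⟨bmap q.1 q.2.1,
        ⟨zmap q.1 q.2.1, bwd_mem P Pε hεpos hεint hc q.1 q.2.1 q.2.2⟩⟩
      left_inv := by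
        rintro ⟨ε, y, hy⟩
        obtain ⟨h1, h2⟩ := bz_involutive ε y
        exact sigsub_ext h1 h2
      right_inv := by
        rintro ⟨δ, z, hz⟩
        obtain ⟨h1, h2⟩ := bz_involutive δ z
        exact Prod.ext_iff.mpr ⟨h1, Subtype.ext h2⟩ }
  have hTfin : {z : Fin d → ℤ | (fun i => (z i : ℝ)) ∈ (m:ℝ) • P}.Finite := by
    obtain ⟨S, -, hP⟩ := hlat
    rw [hP]
    exact finite_dilate_hull S _
  have hSfin : ∀ ε : Fin d → Bool,
      {y : Fin d → ℤ | (fun i => (y i : ℝ)) ∈ (m:ℝ) • uncond (Pε ε)}.Finite := by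
    intro ε
    obtain ⟨S, -, hQ⟩ := hεlat ε
    rw [hQ]
    exact finite_dilate_uncond S _
  calc ∑ ε : Fin d → Bool, latticeCount (uncond (Pε ε)) m
      = Nat.card (Σ ε : Fin d → Bool, Ssub ε) := (ncard_sigma_sum _ hSfin).symm
    _ = Nat.card ((Fin d → Bool) × Tsub) := Nat.card_congr e
    _ = Nat.card (Fin d → Bool) * Nat.card Tsub := Nat.card_prod _ _
    _ = 2 ^ d * latticeCount P m := by
        have h1 : Nat.card (Fin d → Bool) = 2 ^ d := by
          rw [Nat.card_eq_fintype_card, Fintype.card_fun, Fintype.card_bool, Fintype.card_fin]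
        have h2 : Nat.card Tsub = latticeCount P m := Nat.card_coe_set_eq _
        rw [h1, h2]

end CountMain

end ABP


namespace ABP

section Part1

variable {d : ℕ}

lemma sum_hstar (P : Set (Fin d → ℝ)) (hlat : IsLatticePolytope P) (hdim : polyDim P = d)
    (Pε : (Fin d → Bool) → Set (Fin d → ℝ))
    (hεlat : ∀ ε, IsLatticePolytope (Pε ε))
    (hεdim : ∀ ε, polyDim (Pε ε) = d)
    (hεpos : ∀ ε, (Pε ε) ⊆ {x | ∀ i, 0 ≤ x i})
    (hεint : ∀ ε, P ∩ orthant ε = uncond (Pε ε) ∩ orthant ε)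
    (h : Polynomial ℝ) (hh : IsHStar P h)
    (hε : (Fin d → Bool) → Polynomial ℝ)
    (hhε : ∀ ε, IsHStar (uncond (Pε ε)) (hε ε)) :
    ∑ ε : Fin d → Bool, hε ε = Polynomial.C ((2:ℝ)^d) * h := by
  have hDim : ∀ ε, polyDim (uncond (Pε ε)) = d := fun ε => polyDim_uncond_eq (hεdim ε)
  have hserε : ∀ ε : Fin d → Bool,
      (PowerSeries.mk fun m => if m = 0 then (1:ℝ) else (latticeCount (uncond (Pε ε)) m : ℝ)) *
        (1 - PowerSeries.X) ^ (d + 1) = ((hε ε : Polynomial ℝ) : PowerSeries ℝ) := by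
    intro ε
    have := hhε ε
    rw [IsHStar, hDim ε] at this
    exact this
  have hh' : (PowerSeries.mk fun m => if m = 0 then (1:ℝ) else (latticeCount P m : ℝ)) *
      (1 - PowerSeries.X) ^ (d + 1) = (h : PowerSeries ℝ) := by
    have := hh
    rw [IsHStar, hdim] at this
    exact this
  have hmk : (∑ ε : Fin d → Bool,
        PowerSeries.mk fun m => if m = 0 then (1:ℝ) else (latticeCount (uncond (Pε ε)) m : ℝ))
      = PowerSeries.C ((2:ℝ)^d) *
        PowerSeries.mk fun m => if m = 0 then (1:ℝ) else (latticeCount P m : ℝ) := by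
    ext n
    rw [map_sum, PowerSeries.coeff_C_mul]
    simp only [PowerSeries.coeff_mk]
    by_cases hn : n = 0
    · subst hn
      simp only [if_true, reduceIte]
      rw [Finset.sum_const, Finset.card_univ, Fintype.card_fun, Fintype.card_bool,
        Fintype.card_fin, nsmul_eq_mul, mul_one]
      push_cast
      ring
    · simp only [hn, if_false]
      calc ∑ ε : Fin d → Bool, ((latticeCount (uncond (Pε ε)) n : ℕ) : ℝ)
          = ((∑ ε : Fin d → Bool, latticeCount (uncond (Pε ε)) n : ℕ) : ℝ) := by
            rw [Nat.cast_sum]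
        _ = ((2 ^ d * latticeCount P n : ℕ) : ℝ) := by
            rw [counting_identity P hlat Pε hεlat hεpos hεint n (Nat.one_le_iff_ne_zero.mpr hn)]
        _ = (2:ℝ) ^ d * (latticeCount P n : ℝ) := by push_cast; ring
  have hser : ((∑ ε : Fin d → Bool, hε ε : Polynomial ℝ) : PowerSeries ℝ) =
      ((Polynomial.C ((2:ℝ)^d) * h : Polynomial ℝ) : PowerSeries ℝ) := by
    rw [Polynomial.coe_mul, Polynomial.coe_C]
    calc ((∑ ε : Fin d → Bool, hε ε : Polynomial ℝ) : PowerSeries ℝ)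
        = Polynomial.coeToPowerSeries.ringHom (∑ ε : Fin d → Bool, hε ε) :=
          Polynomial.coeToPowerSeries.ringHom_apply.symm
      _ = ∑ ε : Fin d → Bool, Polynomial.coeToPowerSeries.ringHom (hε ε) := map_sum _ _ _
      _ = ∑ ε : Fin d → Bool, ((hε ε : Polynomial ℝ) : PowerSeries ℝ) := by
          simp only [Polynomial.coeToPowerSeries.ringHom_apply]
      _ = ∑ ε : Fin d → Bool,
            (PowerSeries.mk fun m =>
              if m = 0 then (1:ℝ) else (latticeCount (uncond (Pε ε)) m : ℝ)) *
              (1 - PowerSeries.X) ^ (d + 1) :=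
          Finset.sum_congr rfl fun ε _ => (hserε ε).symm
      _ = (∑ ε : Fin d → Bool,
            PowerSeries.mk fun m =>
              if m = 0 then (1:ℝ) else (latticeCount (uncond (Pε ε)) m : ℝ)) *
            (1 - PowerSeries.X) ^ (d + 1) := (Finset.sum_mul _ _ _).symm
      _ = PowerSeries.C ((2:ℝ)^d) *
            ((PowerSeries.mk fun m => if m = 0 then (1:ℝ) else (latticeCount P m : ℝ)) *
              (1 - PowerSeries.X) ^ (d + 1)) := by rw [hmk, mul_assoc]
      _ = PowerSeries.C ((2:ℝ)^d) * (h : PowerSeries ℝ) := by rw [hh']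
  exact Polynomial.coe_inj.mp hser

end Part1

end ABP


namespace ABP

section Part2a

variable {d : ℕ}

lemma even_card_involution {α : Type*} [DecidableEq α] (f : α → α) (F : Finset α) :
    (∀ x ∈ F, f x ∈ F) → (∀ x ∈ F, f (f x) = x) → (∀ x ∈ F, f x ≠ x) →
    Even F.card := by
  classical
  induction F using Finset.strongInduction with
  | _ F ih =>
    intro hmem hinv hnf
    rcases F.eq_empty_or_nonempty with rfl | ⟨a, ha⟩
    · simp
    · have hfa : f a ∈ F := hmem a ha
      have hfa_ne : f a ≠ a := hnf a ha
      set F' := (F.erase a).erase (f a) with hF'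
      have hss : F' ⊂ F :=
        Finset.ssubset_of_subset_of_ssubset (Finset.erase_subset _ _)
          (Finset.erase_ssubset ha)
      have hsubF : F' ⊆ F := hss.subset
      have hmemF' : ∀ x, x ∈ F' ↔ (x ≠ f a ∧ x ≠ a ∧ x ∈ F) := by
        intro x
        rw [hF', Finset.mem_erase, Finset.mem_erase]
      have hcard : F.card = F'.card + 2 := by
        have h1 : (F.erase a).card = F.card - 1 := Finset.card_erase_of_mem ha
        have h2 : F'.card = (F.erase a).card - 1 :=
          Finset.card_erase_of_mem (Finset.mem_erase.mpr ⟨hfa_ne, hfa⟩)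
        have h3 : 1 ≤ F.card := Finset.card_pos.mpr ⟨a, ha⟩
        have h4 : 1 ≤ (F.erase a).card :=
          Finset.card_pos.mpr ⟨f a, Finset.mem_erase.mpr ⟨hfa_ne, hfa⟩⟩
        omega
      have heven : Even F'.card := by
        refine ih F' hss ?_ ?_ ?_

        · intro x hx
          obtain ⟨hx1, hx2, hx3⟩ := (hmemF' x).mp hx
          refine (hmemF' (f x)).mpr ⟨?_, ?_, hmem x hx3⟩
          · intro hcon
            have : f (f x) = f (f a) := by rw [hcon]
            rw [hinv x hx3, hinv a ha] at this
            exact hx2 this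
          · intro hcon
            have := hinv x hx3
            rw [hcon] at this
            exact hx1 this.symm
        · intro x hx
          exact hinv x (hsubF hx)
        · intro x hx
          exact hnf x (hsubF hx)
      rw [hcard]
      exact heven.add even_two

lemma odd_ncard_symm (S : Set (Fin d → ℤ)) (hfin : S.Finite) (h0 : (0 : Fin d → ℤ) ∈ S)
    (hneg : ∀ x ∈ S, -x ∈ S) : Odd S.ncard := by
  classical
  set F := hfin.toFinset with hFdef
  have hmemF : ∀ x, x ∈ F ↔ x ∈ S := fun x => Set.Finite.mem_toFinset hfin
  have h0F : (0 : Fin d → ℤ) ∈ F := (hmemF 0).mpr h0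
  have hcard : S.ncard = F.card := by
    rw [hFdef]
    exact Set.ncard_eq_toFinset_card S hfin
  have heven : Even (F.erase 0).card := by
    refine even_card_involution (fun x => -x) _ ?_ ?_ ?_
    · intro x hx
      obtain ⟨hx0, hxF⟩ := Finset.mem_erase.mp hx
      refine Finset.mem_erase.mpr ⟨?_, (hmemF _).mpr (hneg x ((hmemF x).mp hxF))⟩
      simp only [ne_eq, neg_eq_zero]
      exact hx0
    · intro x _; simp
    · intro x hx hcon
      obtain ⟨hx0, -⟩ := Finset.mem_erase.mp hx
      apply hx0
      funext i
      have h2 := congrFun hcon i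
      simp only [Pi.neg_apply] at h2
      have h3 : x i = 0 := by omega
      simp [h3]
  have : F.card = (F.erase 0).card + 1 := by
    rw [Finset.card_erase_of_mem h0F]
    have : 1 ≤ F.card := Finset.card_pos.mpr ⟨0, h0F⟩
    omega
  rw [hcard, this]
  exact heven.add_one

lemma gamma_sum_coeff_zero (n : ℕ) (γ : ℕ → ℝ) :
    (∑ i ∈ Finset.range (n / 2 + 1),
      Polynomial.C (γ i) * Polynomial.X ^ i * (1 + Polynomial.X) ^ (n - 2 * i)).coeff 0
      = γ 0 := by
  rw [Polynomial.coeff_zero_eq_eval_zero, Polynomial.eval_finset_sum]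
  rw [Finset.sum_eq_single_of_mem 0 (Finset.mem_range.mpr (Nat.succ_pos _))]
  · simp
  · intro i _ hi
    simp [Polynomial.eval_pow, zero_pow hi]

lemma gamma_sum_coeff_top (n : ℕ) (γ : ℕ → ℝ) :
    (∑ i ∈ Finset.range (n / 2 + 1),
      Polynomial.C (γ i) * Polynomial.X ^ i * (1 + Polynomial.X) ^ (n - 2 * i)).coeff n
      = γ 0 := by
  rw [Polynomial.finset_sum_coeff]
  rw [Finset.sum_eq_single_of_mem 0 (Finset.mem_range.mpr (Nat.succ_pos _))]
  · rw [pow_zero, mul_one, Nat.mul_zero, Nat.sub_zero, add_comm (1 : Polynomial ℝ),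
      Polynomial.coeff_C_mul, Polynomial.coeff_X_add_one_pow, Nat.choose_self]
    simp
  · intro i hi hi0
    have hle : 2 * i ≤ n := by
      have := Finset.mem_range.mp hi
      omega
    have hi1 : 1 ≤ i := Nat.one_le_iff_ne_zero.mpr hi0
    rw [mul_assoc, Polynomial.coeff_C_mul, mul_comm (Polynomial.X ^ i),
      Polynomial.coeff_mul_X_pow', if_pos (by omega : i ≤ n), add_comm (1 : Polynomial ℝ),
      Polynomial.coeff_X_add_one_pow]
    rw [Nat.choose_eq_zero_of_lt (by omega)]
    simp

lemma gammaPos_coeff_top_eq_coeff_zero {f : Polynomial ℝ} (hf : GammaPositive f) :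
    f.coeff f.natDegree = f.coeff 0 := by
  obtain ⟨γ, -, heq⟩ := hf
  set n := f.natDegree with hn
  rw [heq, gamma_sum_coeff_top n γ, gamma_sum_coeff_zero n γ]

lemma not_gammaPos_one_sub_X : ¬ GammaPositive (1 - Polynomial.X : Polynomial ℝ) := by
  intro hf
  have hdeg : (1 - Polynomial.X : Polynomial ℝ).natDegree = 1 := by
    have : (1 - Polynomial.X : Polynomial ℝ) = -(Polynomial.X - Polynomial.C 1) := by
      rw [Polynomial.C_1]; ring
    rw [this, Polynomial.natDegree_neg, Polynomial.natDegree_X_sub_C]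
  have h1 := gammaPos_coeff_top_eq_coeff_zero hf
  rw [hdeg] at h1
  simp only [Polynomial.coeff_sub, Polynomial.coeff_one, Polynomial.coeff_X_one,
    Polynomial.coeff_X_zero] at h1
  norm_num at h1

lemma mk_one_mul_one_sub_X {R : Type*} [CommRing R] :
    (PowerSeries.mk fun _ => (1:R)) * (1 - PowerSeries.X) = 1 := by
  ext n
  rw [mul_sub, mul_one, map_sub]
  cases n with
  | zero => simp [PowerSeries.coeff_zero_mul_X]
  | succ k => simp [PowerSeries.coeff_succ_mul_X]

lemma hstar_coeff_zero {n : ℕ} {a : ℕ → ℝ} (f : Polynomial ℝ) (ha : a 0 = 1)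
    (hf : PowerSeries.mk a * (1 - PowerSeries.X) ^ n = (f : PowerSeries ℝ)) :
    f.coeff 0 = 1 := by
  have hcc := congrArg (PowerSeries.constantCoeff) hf
  rw [map_mul, map_pow, map_sub, map_one, PowerSeries.constantCoeff_X,
    PowerSeries.constantCoeff_mk, ha, sub_zero, one_pow, mul_one] at hcc
  rw [← Polynomial.coeff_coe, PowerSeries.coeff_zero_eq_constantCoeff_apply, ← hcc]

end Part2a

end ABP


namespace ABP

section Part2b

lemma natDegree_eq_of_hstar_odd {d : ℕ} (L : ℕ → ℕ) (hodd : ∀ m, m ≠ 0 → Odd (L m))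
    (f : Polynomial ℝ)
    (hf : (PowerSeries.mk fun m => if m = 0 then (1:ℝ) else (L m : ℝ)) *
        (1 - PowerSeries.X) ^ (d + 1) = (f : PowerSeries ℝ))
    (hgp : GammaPositive f) :
    f.natDegree = d := by
  classical
  set B : PowerSeries ℤ :=
    (PowerSeries.mk fun m => if m = 0 then (1:ℤ) else (L m : ℤ)) *
      (1 - PowerSeries.X) ^ (d + 1) with hB
  have hmapB : PowerSeries.map (Int.castRingHom ℝ) B = (f : PowerSeries ℝ) := by
    rw [hB, map_mul, map_pow, map_sub, map_one, PowerSeries.map_X, ← hf]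
    congr 1
    ext n
    rw [PowerSeries.coeff_map, PowerSeries.coeff_mk, PowerSeries.coeff_mk]
    split <;> simp
  have hBcoeff : ∀ k, ((PowerSeries.coeff k B : ℤ) : ℝ) = f.coeff k := by
    intro k
    rw [← Polynomial.coeff_coe, ← hmapB, PowerSeries.coeff_map]
    simp
  have hB0 : ∀ k, f.natDegree < k → PowerSeries.coeff k B = 0 := by
    intro k hk
    have h1 := hBcoeff k
    rw [Polynomial.coeff_eq_zero_of_natDegree_lt hk] at h1
    exact_mod_cast h1
  set H : Polynomial ℤ :=
    ∑ k ∈ Finset.range (f.natDegree + 1),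
      Polynomial.C (PowerSeries.coeff k B) * Polynomial.X ^ k with hH
  have hHcoeff : ∀ k, H.coeff k = PowerSeries.coeff k B := by
    intro k
    rw [hH, Polynomial.finset_sum_coeff]
    simp only [Polynomial.C_mul_X_pow_eq_monomial, Polynomial.coeff_monomial]
    rw [Finset.sum_ite_eq' (Finset.range (f.natDegree + 1)) k
      (fun j => PowerSeries.coeff j B)]
    split
    · rfl
    · rename_i hk
      rw [Finset.mem_range] at hk
      exact (hB0 k (by omega)).symm
  have hHser : (H : PowerSeries ℤ) = B := by
    ext k
    rw [Polynomial.coeff_coe, hHcoeff]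
  have hmod : H.map (Int.castRingHom (ZMod 2)) = (1 - Polynomial.X) ^ d := by
    apply Polynomial.coe_inj.mp
    have e1 : ((H.map (Int.castRingHom (ZMod 2)) : Polynomial (ZMod 2)) :
          PowerSeries (ZMod 2))
        = PowerSeries.map (Int.castRingHom (ZMod 2)) (H : PowerSeries ℤ) := by
      ext k
      rw [Polynomial.coeff_coe, Polynomial.coeff_map, PowerSeries.coeff_map,
        Polynomial.coeff_coe]
    have e2 : PowerSeries.map (Int.castRingHom (ZMod 2)) B
        = (PowerSeries.mk fun _ => (1 : ZMod 2)) * (1 - PowerSeries.X) ^ (d + 1) := by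
      rw [hB, map_mul, map_pow, map_sub, map_one, PowerSeries.map_X]
      congr 1
      ext n
      rw [PowerSeries.coeff_map, PowerSeries.coeff_mk, PowerSeries.coeff_mk]
      by_cases hn : n = 0
      · simp [hn]
      · simp only [hn, if_false]
        obtain ⟨k, hk⟩ := hodd n hn
        rw [hk]
        rw [show ((2 * k + 1 : ℕ) : ℤ) = 2 * (k : ℤ) + 1 by push_cast; ring]
        rw [map_add, map_mul, map_one]
        rw [show (Int.castRingHom (ZMod 2)) 2 = 0 by decide]
        ring
    have e3 : (PowerSeries.mk fun _ => (1 : ZMod 2)) * (1 - PowerSeries.X) ^ (d + 1)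
        = (1 - PowerSeries.X) ^ d := by
      calc (PowerSeries.mk fun _ => (1 : ZMod 2)) * (1 - PowerSeries.X) ^ (d + 1)
          = ((PowerSeries.mk fun _ => (1 : ZMod 2)) * (1 - PowerSeries.X)) *
            (1 - PowerSeries.X) ^ d := by ring
        _ = (1 - PowerSeries.X) ^ d := by rw [mk_one_mul_one_sub_X, one_mul]
    have e4 : (((1 - Polynomial.X : Polynomial (ZMod 2)) ^ d : Polynomial (ZMod 2)) :
          PowerSeries (ZMod 2)) = (1 - PowerSeries.X) ^ d := by
      rw [Polynomial.coe_pow]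
      congr 1
      rw [← Polynomial.coeToPowerSeries.ringHom_apply, map_sub, map_one,
        Polynomial.coeToPowerSeries.ringHom_apply, Polynomial.coe_X]
    rw [e1, hHser, e2, e3, ← e4]
  have hcoeffmod : ∀ k, ((H.coeff k : ℤ) : ZMod 2)
      = ((1 - Polynomial.X : Polynomial (ZMod 2)) ^ d).coeff k := by
    intro k
    rw [← hmod, Polynomial.coeff_map]
    simp
  have hbin : ∀ k, ((1 - Polynomial.X : Polynomial (ZMod 2)) ^ d).coeff k
      = (Nat.choose d k : ZMod 2) := by
    have hsub : (1 - Polynomial.X : Polynomial (ZMod 2)) = Polynomial.X + 1 := by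
      have hneg : (-1 : ZMod 2) = 1 := by decide
      calc (1 - Polynomial.X : Polynomial (ZMod 2))
          = Polynomial.C (-1) * Polynomial.X + 1 := by
            rw [map_neg, Polynomial.C_1]; ring
        _ = Polynomial.X + 1 := by rw [hneg, Polynomial.C_1]; ring
    intro k
    rw [hsub, Polynomial.coeff_X_add_one_pow]
  have hf0 : f.coeff 0 = 1 := hstar_coeff_zero f (by simp) hf
  have hge : d ≤ f.natDegree := by
    by_contra hlt
    push_neg at hlt
    have h1 : H.coeff d = 0 := by rw [hHcoeff]; exact hB0 d hlt
    have h2 := hcoeffmod d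
    rw [h1, hbin d, Nat.choose_self] at h2
    rw [Int.cast_zero, Nat.cast_one] at h2
    exact absurd h2 (by decide)
  have hle : f.natDegree ≤ d := by
    by_contra hlt
    push_neg at hlt
    have htop : f.coeff f.natDegree = 1 := by
      rw [gammaPos_coeff_top_eq_coeff_zero hgp, hf0]
    have h1 : H.coeff f.natDegree = 1 := by
      have hcast : ((H.coeff f.natDegree : ℤ) : ℝ) = 1 := by
        rw [hHcoeff, hBcoeff, htop]
      exact_mod_cast hcast
    have h2 := hcoeffmod f.natDegree
    rw [h1, hbin, Nat.choose_eq_zero_of_lt hlt] at h2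
    rw [Int.cast_one, Nat.cast_zero] at h2
    exact absurd h2 (by decide)
  omega

end Part2b

end ABP


namespace ABP

section Part2c

variable {d : ℕ}

lemma uncond_empty : uncond (∅ : Set (Fin d → ℝ)) = ∅ := by
  ext y
  constructor
  · rintro ⟨ε, x, hx, -⟩
    exact absurd hx (Set.notMem_empty x)
  · intro hy
    exact absurd hy (Set.notMem_empty y)

lemma hstar_uncond_empty {g : Polynomial ℝ}
    (hg : IsHStar (uncond (∅ : Set (Fin d → ℝ))) g) : g = 1 - Polynomial.X := by
  rw [IsHStar, uncond_empty] at hg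
  have h2 : polyDim (∅ : Set (Fin d → ℝ)) = 0 := by
    rw [polyDim, vectorSpan_empty]
    exact finrank_bot ℝ _
  have h3 : ∀ m : ℕ, latticeCount (∅ : Set (Fin d → ℝ)) m = 0 := by
    intro m
    rw [latticeCount]
    have : {x : Fin d → ℤ | (fun i => (x i : ℝ)) ∈ (m : ℝ) • (∅ : Set (Fin d → ℝ))} = ∅ := by
      ext x
      simp [Set.smul_set_empty]
    rw [this, Set.ncard_empty]
  have h4 : (PowerSeries.mk fun m =>
      if m = 0 then (1:ℝ) else (latticeCount (∅ : Set (Fin d → ℝ)) m : ℝ)) = 1 := by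
    ext n
    rw [PowerSeries.coeff_mk, PowerSeries.coeff_one]
    split
    · rfl
    · rw [h3]; simp
  rw [h2, h4, pow_one, one_mul] at hg
  apply Polynomial.coe_inj.mp
  rw [← hg, ← Polynomial.coeToPowerSeries.ringHom_apply, map_sub, map_one,
    Polynomial.coeToPowerSeries.ringHom_apply, Polynomial.coe_X]

lemma zero_mem_antiblocking {Q : Set (Fin d → ℝ)} (hab : IsAntiBlocking Q)
    (hne : Q.Nonempty) : (0 : Fin d → ℝ) ∈ Q := by
  obtain ⟨y, hy⟩ := hne
  exact hab.2 y hy 0 (fun i => ⟨le_rfl, hab.1 y hy i⟩)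

lemma odd_latticeCount_uncond (Q : Set (Fin d → ℝ)) (hQlat : IsLatticePolytope Q)
    (h0 : (0 : Fin d → ℝ) ∈ Q) (m : ℕ) (hm : m ≠ 0) :
    Odd (latticeCount (uncond Q) m) := by
  obtain ⟨S, -, hQ⟩ := hQlat
  rw [latticeCount]
  have hfin : {x : Fin d → ℤ | (fun i => (x i : ℝ)) ∈ (m : ℝ) • uncond Q}.Finite := by
    rw [hQ]
    exact finite_dilate_uncond S _
  refine odd_ncard_symm _ hfin ?_ ?_
  · show (fun i => (((0 : Fin d → ℤ)) i : ℝ)) ∈ (m : ℝ) • uncond Q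
    have hz : (fun i => (((0 : Fin d → ℤ)) i : ℝ)) = (0 : Fin d → ℝ) := by
      funext i; simp
    rw [hz]
    exact ⟨0, mem_uncond_self h0, smul_zero _⟩
  · intro x hx
    obtain ⟨w, hw, hwx⟩ := hx
    show (fun i => ((-x) i : ℝ)) ∈ (m : ℝ) • uncond Q
    have hneg : (fun i => ((-x) i : ℝ)) = -(fun i => ((x : Fin d → ℤ) i : ℝ)) := by
      funext i; push_cast; simp
    rw [hneg, ← hwx]
    refine ⟨-w, neg_mem_uncond hw, ?_⟩
    show (m : ℝ) • (-w) = -((m : ℝ) • w)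
    rw [smul_neg]

end Part2c

end ABP

open ABP

/-- Theorem: h* of locally anti-blocking polytopes.
If `P ⊂ ℝ^d` is a locally anti-blocking lattice polytope of dimension `d`, realized on each
orthant by the anti-blocking polytope `Pε`, then
`h*(P,x) = (1/2^d) ∑_ε h*(Pε^±, x)`; in particular `h*(P,x)` is γ-positive whenever all
`h*(Pε^±, x)` are. -/
theorem hstar_locally_anti_blocking {d : ℕ} (P : Set (Fin d → ℝ))
    (hlat : IsLatticePolytope P) (hdim : polyDim P = d)
    (Pε : (Fin d → Bool) → Set (Fin d → ℝ))
    (hεlat : ∀ ε, IsLatticePolytope (Pε ε))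
    (hεab : ∀ ε, IsAntiBlocking (Pε ε))
    (hεdim : ∀ ε, polyDim (Pε ε) = d)
    (hεpos : ∀ ε, (Pε ε) ⊆ {x | ∀ i, 0 ≤ x i})
    (hεint : ∀ ε, P ∩ orthant ε = uncond (Pε ε) ∩ orthant ε)
    (h : Polynomial ℝ) (hh : IsHStar P h)
    (hε : (Fin d → Bool) → Polynomial ℝ)
    (hhε : ∀ ε, IsHStar (uncond (Pε ε)) (hε ε)) :
    (h = Polynomial.C (((2 : ℝ) ^ d)⁻¹) * ∑ ε : Fin d → Bool, hε ε) ∧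
      ((∀ ε, GammaPositive (hε ε)) → GammaPositive h) := by
  have hsum := sum_hstar P hlat hdim Pε hεlat hεdim hεpos hεint h hh hε hhε
  have h2d : ((2:ℝ)^d) ≠ 0 := by positivity
  have hpart1 : h = Polynomial.C (((2 : ℝ) ^ d)⁻¹) * ∑ ε : Fin d → Bool, hε ε := by
    rw [hsum, ← mul_assoc, ← Polynomial.C_mul, inv_mul_cancel₀ h2d, Polynomial.C_1, one_mul]
  refine ⟨hpart1, ?_⟩
  intro hGP
  have hDim : ∀ ε, polyDim (uncond (Pε ε)) = d := fun ε => polyDim_uncond_eq (hεdim ε)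
  have hserε : ∀ ε : Fin d → Bool,
      (PowerSeries.mk fun m => if m = 0 then (1:ℝ) else (latticeCount (uncond (Pε ε)) m : ℝ)) *
        (1 - PowerSeries.X) ^ (d + 1) = ((hε ε : Polynomial ℝ) : PowerSeries ℝ) := by
    intro ε
    have := hhε ε
    rwa [IsHStar, hDim ε] at this
  have hdeg : ∀ ε, (hε ε).natDegree = d := by
    intro ε
    rcases Set.eq_empty_or_nonempty (Pε ε) with hemp | hne
    · exfalso
      have hthis := hhε ε
      rw [hemp] at hthis
      have h1X : hε ε = 1 - Polynomial.X := hstar_uncond_empty hthis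
      exact not_gammaPos_one_sub_X (h1X ▸ hGP ε)
    · have h0 : (0 : Fin d → ℝ) ∈ Pε ε := zero_mem_antiblocking (hεab ε) hne
      exact natDegree_eq_of_hstar_odd (latticeCount (uncond (Pε ε)))
        (fun m hm => odd_latticeCount_uncond (Pε ε) (hεlat ε) h0 m hm)
        (hε ε) (hserε ε) (hGP ε)
  have hc0 : ∀ ε, (hε ε).coeff 0 = 1 := fun ε => hstar_coeff_zero (hε ε) (by simp) (hserε ε)
  have hctop : ∀ ε, (hε ε).coeff d = 1 := by
    intro ε
    have := gammaPos_coeff_top_eq_coeff_zero (hGP ε)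
    rwa [hdeg ε, hc0 ε] at this
  have hcoeffh : ∀ k, h.coeff k = ((2:ℝ)^d)⁻¹ * ∑ ε : Fin d → Bool, (hε ε).coeff k := by
    intro k
    rw [hpart1, Polynomial.coeff_C_mul, Polynomial.finset_sum_coeff]
  have hhd : h.coeff d = 1 := by
    rw [hcoeffh]
    rw [show (∑ ε : Fin d → Bool, (hε ε).coeff d) = ∑ _ε : Fin d → Bool, (1:ℝ) from
      Finset.sum_congr rfl fun ε _ => hctop ε]
    rw [Finset.sum_const, Finset.card_univ, Fintype.card_fun, Fintype.card_bool,
      Fintype.card_fin, nsmul_eq_mul, mul_one]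
    push_cast
    rw [inv_mul_cancel₀ h2d]
  have hhk : ∀ k, d < k → h.coeff k = 0 := by
    intro k hk
    rw [hcoeffh]
    rw [show (∑ ε : Fin d → Bool, (hε ε).coeff k) = ∑ _ε : Fin d → Bool, (0:ℝ) from
      Finset.sum_congr rfl fun ε _ =>
        Polynomial.coeff_eq_zero_of_natDegree_lt (by rw [hdeg ε]; exact hk)]
    simp
  have hhdeg : h.natDegree = d :=
    le_antisymm (Polynomial.natDegree_le_iff_coeff_eq_zero.mpr fun N hN => hhk N hN)
      (Polynomial.le_natDegree_of_ne_zero (by rw [hhd]; exact one_ne_zero))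
  choose γ hγnonneg hγeq using hGP
  have hγeq' : ∀ ε : Fin d → Bool, hε ε = ∑ i ∈ Finset.range (d / 2 + 1),
      Polynomial.C (γ ε i) * Polynomial.X ^ i * (1 + Polynomial.X) ^ (d - 2 * i) := by
    intro ε
    have := hγeq ε
    rwa [hdeg ε] at this
  refine ⟨fun i => ((2:ℝ)^d)⁻¹ * ∑ ε : Fin d → Bool, γ ε i,
    fun i => mul_nonneg (by positivity) (Finset.sum_nonneg fun ε _ => hγnonneg ε i), ?_⟩
  rw [hhdeg, hpart1]
  rw [show (∑ ε : Fin d → Bool, hε ε) = ∑ ε : Fin d → Bool, ∑ i ∈ Finset.range (d / 2 + 1),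
      Polynomial.C (γ ε i) * Polynomial.X ^ i * (1 + Polynomial.X) ^ (d - 2 * i) from
    Finset.sum_congr rfl fun ε _ => hγeq' ε]
  rw [Finset.sum_comm, Finset.mul_sum]
  refine Finset.sum_congr rfl fun i _ => ?_
  rw [Polynomial.C_mul, map_sum]
  simp only [Finset.mul_sum, Finset.sum_mul]
  exact Finset.sum_congr rfl fun ε _ => by ring
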